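/- arXiv:0905.0040 — 2 statements merged into one kernel-verified Lean document; each statement's English description precedes it below -/
import Mathlib

section
/- In the Lie algebra of the previous context, the fundamental 2-form F = e¹∧Je¹ + e²∧Je² + e³∧Je³ satisfies d(F²) = 0, i.e. the associated invariant Hermitian metric is balanced. -/
set_option maxHeartbeats 2000000 in
/-- On the 6-dimensional Lie algebra with `de¹ = dJe¹ = de² = dJe² = de³ = 0`
and `d(Je³) = e¹∧Je¹ - e²∧Je²`, the fundamental form
`F = e¹∧Je¹ + e²∧Je² + e³∧Je³` satisfies `d(F∧F) = 0`: the invariant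
Hermitian metric is balanced. -/
theorem stmt_13
    (d : ExteriorAlgebra ℝ (Fin 6 → ℝ) →ₗ[ℝ] ExteriorAlgebra ℝ (Fin 6 → ℝ))
    (ε : Fin 6 → ExteriorAlgebra ℝ (Fin 6 → ℝ))
    (hε : ∀ i, ε i = ExteriorAlgebra.ι ℝ (Pi.single i 1))
    (hd0 : d (ε 0) = 0) (hd1 : d (ε 1) = 0) (hd2 : d (ε 2) = 0)
    (hd3 : d (ε 3) = 0) (hd4 : d (ε 4) = 0)
    (hd5 : d (ε 5) = ε 0 * ε 1 - ε 2 * ε 3)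
    (hleib : ∀ (x : Fin 6 → ℝ) (y : ExteriorAlgebra ℝ (Fin 6 → ℝ)),
      d (ExteriorAlgebra.ι ℝ x * y)
        = d (ExteriorAlgebra.ι ℝ x) * y - ExteriorAlgebra.ι ℝ x * d y) :
    let F := ε 0 * ε 1 + ε 2 * ε 3 + ε 4 * ε 5
    d (F * F) = 0 := by
  intro F
  -- Leibniz rule in terms of `ε`
  have hl : ∀ i y, d (ε i * y) = d (ε i) * y - ε i * d y := by
    intro i y; rw [hε i]; exact hleib _ y
  -- square-zero and anticommutation
  have Zt : ∀ i, ε i * ε i = 0 := by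
    intro i; rw [hε i]; exact ExteriorAlgebra.ι_sq_zero _
  have Tgen : ∀ i j, ε i * ε j = -(ε j * ε i) := by
    intro i j
    have h := ExteriorAlgebra.ι_add_mul_swap (R := ℝ) (M := Fin 6 → ℝ)
      (Pi.single i 1) (Pi.single j 1)
    rw [hε i, hε j]
    exact eq_neg_of_add_eq_zero_left h
  have Z : ∀ i z, ε i * (ε i * z) = 0 := by
    intro i z; rw [← mul_assoc, Zt, zero_mul]
  have Sgen : ∀ i j z, ε i * (ε j * z) = -(ε j * (ε i * z)) := by
    intro i j z; rw [← mul_assoc, Tgen, neg_mul, mul_assoc]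
  -- derivatives of the basic 2-forms
  have hdab : d (ε 0 * ε 1) = 0 := by rw [hl, hd0, hd1]; simp
  have hdce : d (ε 2 * ε 3) = 0 := by rw [hl, hd2, hd3]; simp
  have hdfg : d (ε 4 * ε 5) = -(ε 4 * (ε 0 * ε 1 - ε 2 * ε 3)) := by
    rw [hl, hd4, hd5]; simp
  have hab : ∀ y, d (ε 0 * ε 1 * y) = ε 0 * ε 1 * d y := by
    intro y; rw [mul_assoc, hl, hd0, hl, hd1, mul_assoc]; simp [mul_sub]
  have hce : ∀ y, d (ε 2 * ε 3 * y) = ε 2 * ε 3 * d y := by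
    intro y; rw [mul_assoc, hl, hd2, hl, hd3, mul_assoc]; simp [mul_sub]
  have hfg : ∀ y, d (ε 4 * ε 5 * y)
      = -(ε 4 * ((ε 0 * ε 1 - ε 2 * ε 3) * y)) + ε 4 * ε 5 * d y := by
    intro y; rw [mul_assoc, hl, hd4, hl, hd5, mul_assoc]; simp only [zero_mul, zero_sub, mul_sub, neg_sub]; abel
  show d ((ε 0 * ε 1 + ε 2 * ε 3 + ε 4 * ε 5) *
      (ε 0 * ε 1 + ε 2 * ε 3 + ε 4 * ε 5)) = 0
  simp only [mul_add, add_mul, map_add]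
  rw [hab, hab, hab, hce, hce, hce, hfg, hfg, hfg, hdab, hdce, hdfg]
  simp only [mul_zero, add_zero, zero_add, mul_sub, sub_mul, mul_add, add_mul,
    mul_neg, neg_mul, neg_neg, mul_assoc, neg_sub, sub_eq_add_neg, neg_add]
  simp only [Sgen 1 0, Sgen 2 0, Sgen 2 1, Sgen 3 0, Sgen 3 1, Sgen 3 2,
    Sgen 4 0, Sgen 4 1, Sgen 4 2, Sgen 4 3,
    Sgen 5 0, Sgen 5 1, Sgen 5 2, Sgen 5 3, Sgen 5 4,
    Tgen 1 0, Tgen 2 0, Tgen 2 1, Tgen 3 0, Tgen 3 1, Tgen 3 2,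
    Tgen 4 0, Tgen 4 1, Tgen 4 2, Tgen 4 3,
    Tgen 5 0, Tgen 5 1, Tgen 5 2, Tgen 5 3, Tgen 5 4,
    Z, Zt, mul_neg, neg_mul, neg_neg, mul_zero, zero_mul, neg_zero,
    add_zero, zero_add]
  abel
end

section
/- In the Lie algebra of the previous context, the complex 3-form Ω = (e¹ + i Je¹) ∧ (e² + i Je²) ∧ (e³ + i Je³) is closed: dΩ = 0. -/
open ExteriorAlgebra in
private lemma aux_anti (x y : Fin 6 → ℂ) :
    ι ℂ x * ι ℂ y = -(ι ℂ y * ι ℂ x) :=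
  eq_neg_of_add_eq_zero_left (ι_add_mul_swap x y)

open ExteriorAlgebra in
private lemma aux_tri (x y : Fin 6 → ℂ) (c : ℂ) :
    ι ℂ (x + c • y) * (ι ℂ x * ι ℂ y) = 0 := by
  rw [map_add, map_smul, add_mul, smul_mul_assoc]
  rw [← mul_assoc, ι_sq_zero, zero_mul, zero_add]
  rw [← mul_assoc, aux_anti y x, neg_mul, mul_assoc, ι_sq_zero, mul_zero,
    neg_zero, smul_zero]

open ExteriorAlgebra in
private lemma aux_comm (x y z : Fin 6 → ℂ) :
    ι ℂ z * (ι ℂ x * ι ℂ y) = (ι ℂ x * ι ℂ y) * ι ℂ z := by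
  rw [← mul_assoc, aux_anti z x, neg_mul, mul_assoc, aux_anti z y, mul_neg,
    neg_neg, ← mul_assoc]

/-- On the (complexified) 6-dimensional Lie algebra with
`de¹ = dJe¹ = de² = dJe² = de³ = 0` and `d(Je³) = e¹∧Je¹ - e²∧Je²`, the
complex 3-form `Ω = (e¹ + i Je¹)∧(e² + i Je²)∧(e³ + i Je³)` is closed. -/
theorem stmt_14
    (d : ExteriorAlgebra ℂ (Fin 6 → ℂ) →ₗ[ℂ] ExteriorAlgebra ℂ (Fin 6 → ℂ))
    (ε : Fin 6 → ExteriorAlgebra ℂ (Fin 6 → ℂ))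
    (hε : ∀ i, ε i = ExteriorAlgebra.ι ℂ (Pi.single i 1))
    (hd0 : d (ε 0) = 0) (hd1 : d (ε 1) = 0) (hd2 : d (ε 2) = 0)
    (hd3 : d (ε 3) = 0) (hd4 : d (ε 4) = 0)
    (hd5 : d (ε 5) = ε 0 * ε 1 - ε 2 * ε 3)
    (hleib : ∀ (x : Fin 6 → ℂ) (y : ExteriorAlgebra ℂ (Fin 6 → ℂ)),
      d (ExteriorAlgebra.ι ℂ x * y)
        = d (ExteriorAlgebra.ι ℂ x) * y - ExteriorAlgebra.ι ℂ x * d y) :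
    let Ω := (ε 0 + Complex.I • ε 1) * (ε 2 + Complex.I • ε 3) * (ε 4 + Complex.I • ε 5)
    d Ω = 0 := by
  intro Ω
  set a : Fin 6 → (Fin 6 → ℂ) := fun i => Pi.single i 1 with ha
  have hεa : ∀ i, ε i = ExteriorAlgebra.ι ℂ (a i) := fun i => hε i
  set v1 := a 0 + Complex.I • a 1 with hv1
  set v2 := a 2 + Complex.I • a 3 with hv2
  set v3 := a 4 + Complex.I • a 5 with hv3
  have hA : ε 0 + Complex.I • ε 1 = ExteriorAlgebra.ι ℂ v1 := by
    rw [hεa 0, hεa 1, hv1, map_add, map_smul]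
  have hB : ε 2 + Complex.I • ε 3 = ExteriorAlgebra.ι ℂ v2 := by
    rw [hεa 2, hεa 3, hv2, map_add, map_smul]
  have hC : ε 4 + Complex.I • ε 5 = ExteriorAlgebra.ι ℂ v3 := by
    rw [hεa 4, hεa 5, hv3, map_add, map_smul]
  have hdA : d (ExteriorAlgebra.ι ℂ v1) = 0 := by
    rw [← hA, map_add, map_smul, hd0, hd1, smul_zero, add_zero]
  have hdB : d (ExteriorAlgebra.ι ℂ v2) = 0 := by
    rw [← hB, map_add, map_smul, hd2, hd3, smul_zero, add_zero]
  have hdC : d (ExteriorAlgebra.ι ℂ v3) = Complex.I • (ε 0 * ε 1 - ε 2 * ε 3) := by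
    rw [← hC, map_add, map_smul, hd4, hd5, zero_add]
  have hΩ : Ω = ExteriorAlgebra.ι ℂ v1 * (ExteriorAlgebra.ι ℂ v2 * ExteriorAlgebra.ι ℂ v3) := by
    rw [show Ω = (ε 0 + Complex.I • ε 1) * (ε 2 + Complex.I • ε 3) * (ε 4 + Complex.I • ε 5) from rfl,
      hA, hB, hC, mul_assoc]
  rw [hΩ, hleib v1, hdA, zero_mul, zero_sub, hleib v2, hdB, zero_mul, zero_sub,
    mul_neg, neg_neg, hdC]
  rw [smul_sub, mul_sub, mul_sub, hεa 0, hεa 1, hεa 2, hεa 3]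
  rw [mul_smul_comm, mul_smul_comm, aux_comm (a 0) (a 1) v2, ← mul_assoc]
  rw [hv1, aux_tri (a 0) (a 1) Complex.I, zero_mul, smul_zero, zero_sub, neg_eq_zero]
  rw [mul_smul_comm, hv2, aux_tri (a 2) (a 3) Complex.I, smul_zero, mul_zero]
end
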